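/- Let R1, R2, R3, R4 be four distinct simple graphs on the same finite vertex set V, pairwise related by a single 2-switch, each with m edges. For each nonempty proper subset I of {1,2,3,4}, let s_I be the number of vertex pairs that are edges in exactly the realizations R_i with i in I. Then for each i in {1,2,3,4}, s_{{i}} = 1 and s_{{1,2,3,4}\{i}} = 1, and s_I = 0 whenever |I| = 2. -/

import Mathlib

/-- Two unordered vertex pairs {a,b} and {c,d} are equal. -/
def pairEq {V : Type*} (a b c d : V) : Prop := (a = c ∧ b = d) ∨ (a = d ∧ b = c)

/-- `G'` is obtained from `G` by the 2-switch on the alternating 4-cycle `[u,v : w,x]`: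
`uv, wx` are edges of `G`, `ux, vw` are non-edges, the four vertices are distinct, and the
adjacency of exactly these four pairs is toggled. -/
def IsTwoSwitchAt {V : Type*} (G G' : SimpleGraph V) (u v w x : V) : Prop :=
  u ≠ v ∧ u ≠ w ∧ u ≠ x ∧ v ≠ w ∧ v ≠ x ∧ w ≠ x ∧
  G.Adj u v ∧ G.Adj w x ∧ ¬ G.Adj u x ∧ ¬ G.Adj v w ∧
  ∀ a b, G'.Adj a b ↔
    Xor' (G.Adj a b) (pairEq a b u v ∨ pairEq a b w x ∨ pairEq a b u x ∨ pairEq a b v w)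

/-- `G'` is obtained from `G` by a single 2-switch. -/
def IsTwoSwitch {V : Type*} (G G' : SimpleGraph V) : Prop :=
  ∃ u v w x, IsTwoSwitchAt G G' u v w x

/-- The degree of `y` in `G`, as the number of neighbors. -/
noncomputable def ndeg {V : Type*} (G : SimpleGraph V) (y : V) : ℕ := (G.neighborSet y).ncard

namespace VennAux
variable {V : Type*}

/-- Two Sym2 elements share no vertex. -/
def DisjE (e f : Sym2 V) : Prop := ∀ z, z ∈ e → z ∉ f

/-- Two Sym2 elements share a vertex. -/
def MeetE (e f : Sym2 V) : Prop := ∃ z, z ∈ e ∧ z ∈ f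

lemma DisjE.symm {e f : Sym2 V} (h : DisjE e f) : DisjE f e :=
  fun z hz hz' => h z hz' hz

lemma MeetE.symm {e f : Sym2 V} (h : MeetE e f) : MeetE f e :=
  let ⟨z, h1, h2⟩ := h; ⟨z, h2, h1⟩

lemma DisjE.ne {e f : Sym2 V} (h : DisjE e f) : e ≠ f := by
  rintro rfl
  induction e using Sym2.ind with
  | _ x y => exact h x (by simp) (by simp)

lemma not_meet_of_disj {e f : Sym2 V} (h : DisjE e f) (h' : MeetE e f) : False := by
  obtain ⟨z, h1, h2⟩ := h'; exact h z h1 h2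

lemma eq_of_two_mem {e : Sym2 V} {x y : V} (hxy : x ≠ y) (hx : x ∈ e) (hy : y ∈ e) :
    e = s(x,y) := (Sym2.mem_and_mem_iff hxy).1 ⟨hx, hy⟩

/-- Abstract two-switch data between edge sets `A` and `B`:
`p,q` are removed, `r,t` added, with the 4-cycle geometry. -/
structure Sw (A B : Set (Sym2 V)) where
  p : Sym2 V
  q : Sym2 V
  r : Sym2 V
  t : Sym2 V
  hp : p ∈ A
  hq : q ∈ A
  hr : r ∉ A
  ht : t ∉ A
  dpq : DisjE p q
  drt : DisjE r t
  mrp : MeetE r p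
  mrq : MeetE r q
  mtp : MeetE t p
  mtq : MeetE t q
  tog : ∀ e, e ∈ B ↔ Xor' (e ∈ A) (e = p ∨ e = q ∨ e = r ∨ e = t)

namespace Sw
variable {A B : Set (Sym2 V)} (S : Sw A B)

lemma pq_ne : S.p ≠ S.q := S.dpq.ne
lemma rt_ne : S.r ≠ S.t := S.drt.ne
lemma pr_ne : S.p ≠ S.r := fun h => S.hr (h ▸ S.hp)
lemma pt_ne : S.p ≠ S.t := fun h => S.ht (h ▸ S.hp)
lemma qr_ne : S.q ≠ S.r := fun h => S.hr (h ▸ S.hq)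
lemma qt_ne : S.q ≠ S.t := fun h => S.ht (h ▸ S.hq)

/-- membership in the toggled 4-set -/
def D (e : Sym2 V) : Prop := e = S.p ∨ e = S.q ∨ e = S.r ∨ e = S.t

lemma mem_iff (e : Sym2 V) : e ∈ B ↔ Xor' (e ∈ A) (S.D e) := S.tog e

lemma sdiff1 (e : Sym2 V) : e ∈ A ∧ e ∉ B ↔ (e = S.p ∨ e = S.q) := by
  rw [S.mem_iff e]
  constructor
  · rintro ⟨hA, hB⟩
    rcases Classical.em (S.D e) with hD | hD
    · rcases hD with rfl | rfl | rfl | rfl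
      · exact Or.inl rfl
      · exact Or.inr rfl
      · exact absurd hA S.hr
      · exact absurd hA S.ht
    · exact absurd (Or.inl ⟨hA, hD⟩) hB
  · rintro (rfl | rfl)
    · exact ⟨S.hp, by simp [Xor', S.hp, D]⟩
    · exact ⟨S.hq, by simp [Xor', S.hq, D]⟩

lemma sdiff2 (e : Sym2 V) : e ∉ A ∧ e ∈ B ↔ (e = S.r ∨ e = S.t) := by
  rw [S.mem_iff e]
  constructor
  · rintro ⟨hA, hB⟩
    rcases hB with ⟨h1, _⟩ | ⟨hD, _⟩
    · exact absurd h1 hA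
    · rcases hD with rfl | rfl | rfl | rfl
      · exact absurd S.hp hA
      · exact absurd S.hq hA
      · exact Or.inl rfl
      · exact Or.inr rfl
  · rintro (rfl | rfl)
    · exact ⟨S.hr, Or.inr ⟨by simp [D], S.hr⟩⟩
    · exact ⟨S.ht, Or.inr ⟨by simp [D], S.ht⟩⟩

/-- complementing the edge sets swaps removed and added. -/
def compl : Sw Aᶜ Bᶜ where
  p := S.r
  q := S.t
  r := S.p
  t := S.q
  hp := S.hr
  hq := S.ht
  hr := by simpa using S.hp
  ht := by simpa using S.hq
  dpq := S.drt
  drt := S.dpq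
  mrp := S.mrp.symm
  mrq := S.mtp.symm
  mtp := S.mrq.symm
  mtq := S.mtq.symm
  tog := by
    intro e
    have h := S.tog e
    simp only [Set.mem_compl_iff]
    constructor
    · intro hB
      rw [h] at hB
      simp only [Xor', Xor] at *
      tauto
    · intro hx
      rw [h]
      simp only [Xor', Xor] at *
      tauto

end Sw

/-- From a real 2-switch, get abstract data. -/
lemma sw_of_isTwoSwitch {G G' : SimpleGraph V} (h : IsTwoSwitch G G') :
    Nonempty (Sw G.edgeSet G'.edgeSet) := by
  obtain ⟨u, v, w, x, huv, huw, hux, hvw, hvx, hwx, auv, awx, naux, navw, htog⟩ := h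
  refine ⟨⟨s(u,v), s(w,x), s(u,x), s(v,w), G.mem_edgeSet.2 auv, G.mem_edgeSet.2 awx,
    fun hh => naux (G.mem_edgeSet.1 hh), fun hh => navw (G.mem_edgeSet.1 hh),
    ?_, ?_, ⟨u, by simp, by simp⟩, ⟨x, by simp, by simp⟩, ⟨v, by simp, by simp⟩,
    ⟨w, by simp, by simp⟩, ?_⟩⟩
  · intro z hz hz'
    simp only [Sym2.mem_iff] at hz hz'
    rcases hz with rfl | rfl <;> rcases hz' with h | h <;> simp_all
  · intro z hz hz'
    simp only [Sym2.mem_iff] at hz hz'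
    rcases hz with rfl | rfl <;> rcases hz' with h | h <;> simp_all
  · intro e
    induction e using Sym2.ind with
    | _ a b =>
      have hpe : ∀ c d : V, pairEq a b c d ↔ s(a,b) = s(c,d) := by
        intro c d; rw [Sym2.eq_iff]; rfl
      rw [SimpleGraph.mem_edgeSet, htog a b, SimpleGraph.mem_edgeSet,
        hpe u v, hpe w x, hpe u x, hpe v w]

end VennAux


namespace VennAux
variable {V : Type*}

/-- A completion pair (r,t) of disjoint edges p,q decomposes into crossing edges. -/
lemma compPair {p q r t : Sym2 V} (dpq : DisjE p q) (drt : DisjE r t)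
    (mrp : MeetE r p) (mrq : MeetE r q) (mtp : MeetE t p) (mtq : MeetE t q) :
    ∃ z1 z2 z3 z4 : V, z1 ≠ z2 ∧ z1 ≠ z3 ∧ z1 ≠ z4 ∧ z2 ≠ z3 ∧ z2 ≠ z4 ∧ z3 ≠ z4 ∧
      p = s(z1,z3) ∧ q = s(z2,z4) ∧ r = s(z1,z2) ∧ t = s(z3,z4) := by
  obtain ⟨z1, hz1r, hz1p⟩ := mrp
  obtain ⟨z2, hz2r, hz2q⟩ := mrq
  obtain ⟨z3, hz3t, hz3p⟩ := mtp
  obtain ⟨z4, hz4t, hz4q⟩ := mtq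
  have h12 : z1 ≠ z2 := fun h => dpq z1 hz1p (h ▸ hz2q)
  have h13 : z1 ≠ z3 := fun h => drt z1 hz1r (h ▸ hz3t)
  have h14 : z1 ≠ z4 := fun h => dpq z1 hz1p (h ▸ hz4q)
  have h23 : z2 ≠ z3 := fun h => dpq z3 hz3p (h ▸ hz2q)
  have h24 : z2 ≠ z4 := fun h => drt z2 hz2r (h ▸ hz4t)
  have h34 : z3 ≠ z4 := fun h => dpq z3 hz3p (h ▸ hz4q)
  exact ⟨z1, z2, z3, z4, h12, h13, h14, h23, h24, h34,
    eq_of_two_mem h13 hz1p hz3p, eq_of_two_mem h24 hz2q hz4q,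
    eq_of_two_mem h12 hz1r hz2r, eq_of_two_mem h34 hz3t hz4t⟩

/-- Classify a completion pair relative to a fixed decomposition of p,q. -/
lemma compClassify {z1 z2 z3 z4 : V} {r t : Sym2 V}
    (h12 : z1 ≠ z2) (h13 : z1 ≠ z3) (h14 : z1 ≠ z4) (h23 : z2 ≠ z3) (h24 : z2 ≠ z4)
    (h34 : z3 ≠ z4)
    (drt : DisjE r t) (mrp : MeetE r s(z1,z3)) (mrq : MeetE r s(z2,z4))
    (mtp : MeetE t s(z1,z3)) (mtq : MeetE t s(z2,z4)) :
    (r = s(z1,z2) ∧ t = s(z3,z4)) ∨ (r = s(z3,z4) ∧ t = s(z1,z2)) ∨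
    (r = s(z1,z4) ∧ t = s(z3,z2)) ∨ (r = s(z3,z2) ∧ t = s(z1,z4)) := by
  obtain ⟨a1, ha1r, ha1p⟩ := mrp
  obtain ⟨a2, ha2r, ha2q⟩ := mrq
  obtain ⟨a3, ha3t, ha3p⟩ := mtp
  obtain ⟨a4, ha4t, ha4q⟩ := mtq
  simp only [Sym2.mem_iff] at ha1p ha2q ha3p ha4q
  have ha12 : a1 ≠ a2 := by
    rcases ha1p with rfl | rfl <;> rcases ha2q with rfl | rfl <;>
      first | exact h12 | exact h14 | exact h23.symm | exact h34
  have ha34 : a3 ≠ a4 := by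
    rcases ha3p with rfl | rfl <;> rcases ha4q with rfl | rfl <;>
      first | exact h12 | exact h14 | exact h23.symm | exact h34
  have hc13 : a1 ≠ a3 := fun h => drt a1 ha1r (h ▸ ha3t)
  have hc14 : a1 ≠ a4 := fun h => drt a1 ha1r (h ▸ ha4t)
  have hc23 : a2 ≠ a3 := fun h => drt a2 ha2r (h ▸ ha3t)
  have hc24 : a2 ≠ a4 := fun h => drt a2 ha2r (h ▸ ha4t)
  have hr2 : r = s(a1,a2) := eq_of_two_mem ha12 ha1r ha2r
  have ht2 : t = s(a3,a4) := eq_of_two_mem ha34 ha3t ha4t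
  subst hr2 ht2
  rcases ha1p with rfl | rfl <;> rcases ha2q with rfl | rfl <;>
    rcases ha3p with rfl | rfl <;> rcases ha4q with rfl | rfl <;> simp_all

end VennAux

namespace VennAux
variable {V : Type*}

lemma card_four {S : Type*} [DecidableEq S] {a b c d : S} (hab : a≠b) (hac : a≠c) (had : a≠d)
    (hbc : b≠c) (hbd : b≠d) (hcd : c≠d) : ({a,b,c,d} : Finset S).card = 4 := by
  rw [Finset.card_insert_of_notMem (by simp [hab,hac,had]),
    Finset.card_insert_of_notMem (by simp [hbc,hbd]),
    Finset.card_insert_of_notMem (by simp [hcd]), Finset.card_singleton]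

/-- For switches A→B, A→C, B→C, the toggled 4-sets of A→B and A→C share exactly
two elements. -/
lemma common_two {A B C : Set (Sym2 V)} (S1 : Sw A B) (S2 : Sw A C) (S12 : Sw B C) :
    ∃ c d : Sym2 V, c ≠ d ∧ (∀ e, (S1.D e ∧ S2.D e) ↔ (e = c ∨ e = d)) := by
  classical
  have hXor : ∀ e, S12.D e ↔ Xor' (S1.D e) (S2.D e) := by
    intro e
    have h1 := S1.mem_iff e
    have h2 := S2.mem_iff e
    have h12 := S12.mem_iff e
    generalize S1.D e = d1 at h1 ⊢
    generalize S2.D e = d2 at h2 ⊢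
    generalize S12.D e = d12 at h12 ⊢
    by_cases ha : e ∈ A <;> by_cases hb : e ∈ B <;> by_cases hc : e ∈ C <;>
      simp only [Xor', Xor, ha, hb, hc, iff_true, iff_false, true_and, false_and,
        and_true, and_false, not_true, not_false_iff, true_iff, false_iff,
        or_false, false_or] at h1 h2 h12 ⊢ <;> tauto
  set F1 : Finset (Sym2 V) := {S1.p, S1.q, S1.r, S1.t} with hF1
  set F2 : Finset (Sym2 V) := {S2.p, S2.q, S2.r, S2.t} with hF2
  set T : Finset (Sym2 V) := {S12.p, S12.q, S12.r, S12.t} with hT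
  have hm1 : ∀ e, e ∈ F1 ↔ S1.D e := by intro e; simp [hF1, Sw.D]
  have hm2 : ∀ e, e ∈ F2 ↔ S2.D e := by intro e; simp [hF2, Sw.D]
  have hmT : ∀ e, e ∈ T ↔ S12.D e := by intro e; simp [hT, Sw.D]
  have hΔ : (F1 \ F2) ∪ (F2 \ F1) = T := by
    ext e
    rw [Finset.mem_union, Finset.mem_sdiff, Finset.mem_sdiff, hm1, hm2, hmT, hXor]
    simp only [Xor', Xor]
  have hc1 : F1.card = 4 := card_four S1.pq_ne S1.pr_ne S1.pt_ne S1.qr_ne S1.qt_ne S1.rt_ne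
  have hc2 : F2.card = 4 := card_four S2.pq_ne S2.pr_ne S2.pt_ne S2.qr_ne S2.qt_ne S2.rt_ne
  have hcT : T.card = 4 := card_four S12.pq_ne S12.pr_ne S12.pt_ne S12.qr_ne S12.qt_ne S12.rt_ne
  have hdisj : Disjoint (F1 \ F2) (F2 \ F1) := by
    apply Finset.disjoint_left.2
    intro a ha hb
    exact (Finset.mem_sdiff.1 hb).2 (Finset.mem_sdiff.1 ha).1
  have hΔcard : (F1 \ F2).card + (F2 \ F1).card = 4 := by
    rw [← Finset.card_union_of_disjoint hdisj, hΔ, hcT]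
  have h1' := Finset.card_inter_add_card_sdiff F1 F2
  have h2' := Finset.card_inter_add_card_sdiff F2 F1
  have hint : (F2 ∩ F1).card = (F1 ∩ F2).card := by rw [Finset.inter_comm]
  have hcard2 : (F1 ∩ F2).card = 2 := by omega
  obtain ⟨c, d, hcd, hcds⟩ := Finset.card_eq_two.1 hcard2
  refine ⟨c, d, hcd, fun e => ?_⟩
  have he : e ∈ F1 ∩ F2 ↔ e = c ∨ e = d := by rw [hcds]; simp
  rw [← he, Finset.mem_inter, hm1, hm2]

end VennAux

namespace VennAux
variable {V : Type*}

lemma pair_determine {S : Type*} {x y a b : S} (hxy : x ≠ y)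
    (hx : x = a ∨ x = b) (hy : y = a ∨ y = b) :
    (x = a ∧ y = b) ∨ (x = b ∧ y = a) := by
  rcases hx with rfl | rfl <;> rcases hy with h | h <;> tauto

namespace Sw
variable {A B C : Set (Sym2 V)}

lemma remD (S : Sw A B) {e : Sym2 V} (h : S.D e) (hA : e ∈ A) : e = S.p ∨ e = S.q := by
  rcases h with rfl | rfl | rfl | rfl
  · exact Or.inl rfl
  · exact Or.inr rfl
  · exact absurd hA S.hr
  · exact absurd hA S.ht

lemma addD (S : Sw A B) {e : Sym2 V} (h : S.D e) (hA : e ∉ A) : e = S.r ∨ e = S.t := by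
  rcases h with rfl | rfl | rfl | rfl
  · exact absurd S.hp hA
  · exact absurd S.hq hA
  · exact Or.inl rfl
  · exact Or.inr rfl

lemma Dp (S : Sw A B) : S.D S.p := Or.inl rfl
lemma Dq (S : Sw A B) : S.D S.q := Or.inr (Or.inl rfl)
lemma Dr (S : Sw A B) : S.D S.r := Or.inr (Or.inr (Or.inl rfl))
lemma Dt (S : Sw A B) : S.D S.t := Or.inr (Or.inr (Or.inr rfl))

lemma eq_of_D_iff (S : Sw A B) (S' : Sw A C) (h : ∀ e, S.D e ↔ S'.D e) : B = C :=
  Set.ext fun e => by rw [S.mem_iff, S'.mem_iff, h]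

lemma E_eq (S : Sw A B) (S' : Sw A C)
    (hpq : (S.p = S'.p ∧ S.q = S'.q) ∨ (S.p = S'.q ∧ S.q = S'.p))
    (hrt : (S.r = S'.r ∧ S.t = S'.t) ∨ (S.r = S'.t ∧ S.t = S'.r)) : B = C := by
  apply S.eq_of_D_iff S'
  intro e
  simp only [D]
  rcases hpq with ⟨h1, h2⟩ | ⟨h1, h2⟩ <;> rcases hrt with ⟨h3, h4⟩ | ⟨h3, h4⟩ <;>
    rw [h1, h2, h3, h4] <;> tauto

end Sw

lemma pair_trans {S : Type*} {x y a b u v : S}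
    (h : (x = a ∧ y = b) ∨ (x = b ∧ y = a)) (h' : (x = u ∧ y = v) ∨ (x = v ∧ y = u)) :
    (a = u ∧ b = v) ∨ (a = v ∧ b = u) := by
  rcases h with ⟨h1, h2⟩ | ⟨h1, h2⟩ <;> rcases h' with ⟨h3, h4⟩ | ⟨h3, h4⟩
  · exact Or.inl ⟨h1.symm.trans h3, h2.symm.trans h4⟩
  · exact Or.inr ⟨h1.symm.trans h3, h2.symm.trans h4⟩
  · exact Or.inr ⟨h2.symm.trans h4, h1.symm.trans h3⟩
  · exact Or.inl ⟨h2.symm.trans h4, h1.symm.trans h3⟩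

/-- If not both removed edges of `S1` are toggled by `S3`, one of the two common
toggled elements is an added edge of `S1`. -/
lemma getO {A E1 E3 : Set (Sym2 V)} (S1 : Sw A E1) (S3 : Sw A E3) {c d : Sym2 V}
    (hcd : c ≠ d) (hch : ∀ e, (S3.D e ∧ S1.D e) ↔ (e = c ∨ e = d))
    (hnpq : ¬ (S3.D S1.p ∧ S3.D S1.q)) :
    ∃ o, S3.D o ∧ (o = S1.r ∨ o = S1.t) := by
  have hc := (hch c).2 (Or.inl rfl)
  have hd := (hch d).2 (Or.inr rfl)
  rcases hc.2 with hc2 | hc2 | hc2 | hc2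
  · rcases hd.2 with hd2 | hd2 | hd2 | hd2
    · exact absurd (hc2.trans hd2.symm) hcd
    · exact absurd ⟨hc2 ▸ hc.1, hd2 ▸ hd.1⟩ hnpq
    · exact ⟨d, hd.1, Or.inl hd2⟩
    · exact ⟨d, hd.1, Or.inr hd2⟩
  · rcases hd.2 with hd2 | hd2 | hd2 | hd2
    · exact absurd ⟨hd2 ▸ hd.1, hc2 ▸ hc.1⟩ hnpq
    · exact absurd (hc2.trans hd2.symm) hcd
    · exact ⟨d, hd.1, Or.inl hd2⟩
    · exact ⟨d, hd.1, Or.inr hd2⟩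
  · exact ⟨c, hc.1, Or.inl hc2⟩
  · exact ⟨c, hc.1, Or.inr hc2⟩

/-- If two of the three switches from `A` share their whole removed pair, contradiction. -/
lemma no_shared_rem {A E1 E2 E3 : Set (Sym2 V)}
    (S1 : Sw A E1) (S2 : Sw A E2) (S3 : Sw A E3)
    (T31 : Sw E3 E1) (T32 : Sw E3 E2)
    (h12 : E1 ≠ E2) (h13 : E1 ≠ E3) (h23 : E2 ≠ E3)
    (hpp : (S1.p = S2.p ∧ S1.q = S2.q) ∨ (S1.p = S2.q ∧ S1.q = S2.p)) : False := by
  -- S2's added edges meet S1.p and S1.q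
  have m2rp : MeetE S2.r S1.p := by rcases hpp with ⟨h, _⟩ | ⟨h, _⟩ <;> rw [h]
    <;> [exact S2.mrp; exact S2.mrq]
  have m2rq : MeetE S2.r S1.q := by rcases hpp with ⟨_, h⟩ | ⟨_, h⟩ <;> rw [h]
    <;> [exact S2.mrq; exact S2.mrp]
  have m2tp : MeetE S2.t S1.p := by rcases hpp with ⟨h, _⟩ | ⟨h, _⟩ <;> rw [h]
    <;> [exact S2.mtp; exact S2.mtq]
  have m2tq : MeetE S2.t S1.q := by rcases hpp with ⟨_, h⟩ | ⟨_, h⟩ <;> rw [h]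
    <;> [exact S2.mtq; exact S2.mtp]
  obtain ⟨z1, z2, z3, z4, h12', h13', h14', h23', h24', h34', hP, hQ, hR, hT⟩ :=
    compPair S1.dpq S1.drt S1.mrp S1.mrq S1.mtp S1.mtq
  rw [hP] at m2rp m2tp
  rw [hQ] at m2rq m2tq
  -- classify S2's added pair; it cannot equal S1's (else E1 = E2)
  have hcl2 := compClassify h12' h13' h14' h23' h24' h34' S2.drt m2rp m2rq m2tp m2tq
  have hne_add : ¬ ((S2.r = s(z1,z2) ∧ S2.t = s(z3,z4)) ∨ (S2.r = s(z3,z4) ∧ S2.t = s(z1,z2))) := by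
    intro h
    apply h12
    apply S1.E_eq S2 hpp
    rw [hR, hT]
    rcases h with ⟨h1, h2⟩ | ⟨h1, h2⟩
    · exact Or.inl ⟨h1.symm, h2.symm⟩
    · exact Or.inr ⟨h2.symm, h1.symm⟩
  have hcl2' : (S2.r = s(z1,z4) ∧ S2.t = s(z3,z2)) ∨ (S2.r = s(z3,z2) ∧ S2.t = s(z1,z4)) := by
    rcases hcl2 with h | h | h | h
    · exact absurd (Or.inl h) hne_add
    · exact absurd (Or.inr h) hne_add
    · exact Or.inl h
    · exact Or.inr h
  -- basic distinctness between the two completions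
  have d11 : s(z1,z2) ≠ s(z1,z4) := by
    intro h; rw [Sym2.eq_iff] at h
    rcases h with ⟨-, h⟩ | ⟨h, -⟩; exacts [h24' h, h14' h]
  have d12 : s(z1,z2) ≠ s(z3,z2) := by
    intro h; rw [Sym2.eq_iff] at h
    rcases h with ⟨h, -⟩ | ⟨h, -⟩; exacts [h13' h, h12' h]
  have d21 : s(z3,z4) ≠ s(z1,z4) := by
    intro h; rw [Sym2.eq_iff] at h
    rcases h with ⟨h, -⟩ | ⟨h, -⟩; exacts [h13' h.symm, h34' h]
  have d22 : s(z3,z4) ≠ s(z3,z2) := by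
    intro h; rw [Sym2.eq_iff] at h
    rcases h with ⟨-, h⟩ | ⟨h, -⟩; exacts [h24' h.symm, h23' h.symm]
  -- meets between the two completions
  have m11 : MeetE s(z1,z2) s(z1,z4) := ⟨z1, by simp, by simp⟩
  have m12 : MeetE s(z1,z2) s(z3,z2) := ⟨z2, by simp, by simp⟩
  have m21 : MeetE s(z3,z4) s(z1,z4) := ⟨z4, by simp, by simp⟩
  have m22 : MeetE s(z3,z4) s(z3,z2) := ⟨z3, by simp, by simp⟩
  obtain ⟨c, d, hcd, hch⟩ := common_two S3 S1 T31
  obtain ⟨c', d', hcd', hch'⟩ := common_two S3 S2 T32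
  -- the uniform final contradiction
  have final : ∀ o o' : Sym2 V, (o = S1.r ∨ o = S1.t) → (o' = S2.r ∨ o' = S2.t) →
      S3.D o → S3.D o' → False := by
    intro o o' h1 h2 h3o h3o'
    have dA : o ∉ A := by rcases h1 with rfl | rfl; exacts [S1.hr, S1.ht]
    have dA' : o' ∉ A := by rcases h2 with rfl | rfl; exacts [S2.hr, S2.ht]
    have hd : o = S3.r ∨ o = S3.t := S3.addD h3o dA
    have hd' : o' = S3.r ∨ o' = S3.t := S3.addD h3o' dA'
    have hdval : o = s(z1,z2) ∨ o = s(z3,z4) := by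
      rcases h1 with rfl | rfl
      · exact Or.inl hR
      · exact Or.inr hT
    have hdval' : o' = s(z1,z4) ∨ o' = s(z3,z2) := by
      rcases h2 with rfl | rfl <;> rcases hcl2' with ⟨ha, hb⟩ | ⟨ha, hb⟩
      · exact Or.inl ha
      · exact Or.inr ha
      · exact Or.inr hb
      · exact Or.inl hb
    have hne : o ≠ o' := by
      rcases hdval with h3 | h3 <;> rcases hdval' with h4 | h4 <;> rw [h3, h4]
      exacts [d11, d12, d21, d22]
    have hpair3 := pair_determine hne hd hd'
    have hdisj : DisjE o o' := by
      rcases hpair3 with ⟨h5, h6⟩ | ⟨h5, h6⟩ <;> rw [h5, h6]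
      exacts [S3.drt, S3.drt.symm]
    have hmeet : MeetE o o' := by
      rcases hdval with h3 | h3 <;> rcases hdval' with h4 | h4 <;> rw [h3, h4]
      exacts [m11, m12, m21, m22]
    exact not_meet_of_disj hdisj hmeet
  by_cases hA : S3.D S1.p ∧ S3.D S1.q
  · -- S3 has the same removed pair: its added pair is one of the two completions
    have hp' : S1.p = S3.p ∨ S1.p = S3.q := S3.remD hA.1 S1.hp
    have hq' : S1.q = S3.p ∨ S1.q = S3.q := S3.remD hA.2 S1.hq
    have hpair : (S1.p = S3.p ∧ S1.q = S3.q) ∨ (S1.p = S3.q ∧ S1.q = S3.p) :=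
      pair_determine S1.pq_ne hp' hq'
    have m3rp : MeetE S3.r S1.p := by
      rcases hpair with ⟨h, -⟩ | ⟨h, -⟩ <;> rw [h]
      exacts [S3.mrp, S3.mrq]
    have m3rq : MeetE S3.r S1.q := by
      rcases hpair with ⟨-, h⟩ | ⟨-, h⟩ <;> rw [h]
      exacts [S3.mrq, S3.mrp]
    have m3tp : MeetE S3.t S1.p := by
      rcases hpair with ⟨h, -⟩ | ⟨h, -⟩ <;> rw [h]
      exacts [S3.mtp, S3.mtq]
    have m3tq : MeetE S3.t S1.q := by
      rcases hpair with ⟨-, h⟩ | ⟨-, h⟩ <;> rw [h]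
      exacts [S3.mtq, S3.mtp]
    rw [hP] at m3rp m3tp
    rw [hQ] at m3rq m3tq
    have hcl3 := compClassify h12' h13' h14' h23' h24' h34' S3.drt m3rp m3rq m3tp m3tq
    rcases hcl3 with ⟨ha, hb⟩ | ⟨ha, hb⟩ | ⟨ha, hb⟩ | ⟨ha, hb⟩
    · exact h13 (S1.E_eq S3 hpair (Or.inl ⟨hR.trans ha.symm, hT.trans hb.symm⟩))
    · exact h13 (S1.E_eq S3 hpair (Or.inr ⟨hR.trans hb.symm, hT.trans ha.symm⟩))
    · refine h23 (S2.E_eq S3 (pair_trans hpp hpair) ?_)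
      rcases hcl2' with ⟨hc2, hd2⟩ | ⟨hc2, hd2⟩
      · exact Or.inl ⟨hc2.trans ha.symm, hd2.trans hb.symm⟩
      · exact Or.inr ⟨hc2.trans hb.symm, hd2.trans ha.symm⟩
    · refine h23 (S2.E_eq S3 (pair_trans hpp hpair) ?_)
      rcases hcl2' with ⟨hc2, hd2⟩ | ⟨hc2, hd2⟩
      · exact Or.inr ⟨hc2.trans hb.symm, hd2.trans ha.symm⟩
      · exact Or.inl ⟨hc2.trans ha.symm, hd2.trans hb.symm⟩
  · -- not the whole removed pair is shared with S3
    obtain ⟨o, h3o, ho⟩ := getO S1 S3 hcd hch hA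
    have hA2 : ¬ (S3.D S2.p ∧ S3.D S2.q) := by
      intro h
      apply hA
      rcases hpp with ⟨e1, e2⟩ | ⟨e1, e2⟩ <;> rw [e1, e2] <;> tauto
    obtain ⟨o', h3o', ho'⟩ := getO S2 S3 hcd' hch' hA2
    exact final o o' ho ho' h3o h3o'

end VennAux

namespace VennAux
variable {V : Type*}

/-- Complemented version: two switches from `A` cannot share their whole added pair. -/
lemma no_shared_add {A E1 E2 E3 : Set (Sym2 V)}
    (S1 : Sw A E1) (S2 : Sw A E2) (S3 : Sw A E3)
    (T31 : Sw E3 E1) (T32 : Sw E3 E2)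
    (h12 : E1 ≠ E2) (h13 : E1 ≠ E3) (h23 : E2 ≠ E3)
    (hrr : (S1.r = S2.r ∧ S1.t = S2.t) ∨ (S1.r = S2.t ∧ S1.t = S2.r)) : False := by
  refine no_shared_rem S1.compl S2.compl S3.compl T31.compl T32.compl ?_ ?_ ?_ hrr
  · exact fun h => h12 (by rw [← compl_compl E1, h, compl_compl])
  · exact fun h => h13 (by rw [← compl_compl E1, h, compl_compl])
  · exact fun h => h23 (by rw [← compl_compl E2, h, compl_compl])

/-- From two commons with both in `A`, the removed pairs coincide. -/
lemma both_rem {A E1 E2 : Set (Sym2 V)} (S1 : Sw A E1) (S2 : Sw A E2) {c d : Sym2 V}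
    (hcd : c ≠ d) (hch : ∀ e, (S1.D e ∧ S2.D e) ↔ (e = c ∨ e = d))
    (hcA : c ∈ A) (hdA : d ∈ A) :
    (S1.p = S2.p ∧ S1.q = S2.q) ∨ (S1.p = S2.q ∧ S1.q = S2.p) := by
  have hc := (hch c).2 (Or.inl rfl)
  have hd := (hch d).2 (Or.inr rfl)
  have h1 := pair_determine hcd (S1.remD hc.1 hcA) (S1.remD hd.1 hdA)
  have h2 := pair_determine hcd (S2.remD hc.2 hcA) (S2.remD hd.2 hdA)
  exact pair_trans h1 h2

lemma both_add {A E1 E2 : Set (Sym2 V)} (S1 : Sw A E1) (S2 : Sw A E2) {c d : Sym2 V}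
    (hcd : c ≠ d) (hch : ∀ e, (S1.D e ∧ S2.D e) ↔ (e = c ∨ e = d))
    (hcA : c ∉ A) (hdA : d ∉ A) :
    (S1.r = S2.r ∧ S1.t = S2.t) ∨ (S1.r = S2.t ∧ S1.t = S2.r) := by
  have hc := (hch c).2 (Or.inl rfl)
  have hd := (hch d).2 (Or.inr rfl)
  have h1 := pair_determine hcd (S1.addD hc.1 hcA) (S1.addD hd.1 hdA)
  have h2 := pair_determine hcd (S2.addD hc.2 hcA) (S2.addD hd.2 hdA)
  exact pair_trans h1 h2

/-- The three switches from `A` all share one removed edge. -/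
lemma shared_rem_common {A E1 E2 E3 : Set (Sym2 V)}
    (S1 : Sw A E1) (S2 : Sw A E2) (S3 : Sw A E3)
    (T12 : Sw E1 E2) (T13 : Sw E1 E3) (T23 : Sw E2 E3)
    (T21 : Sw E2 E1) (T31 : Sw E3 E1) (T32 : Sw E3 E2)
    (h12 : E1 ≠ E2) (h13 : E1 ≠ E3) (h23 : E2 ≠ E3) :
    ∃ es, es ∈ A ∧ (es = S1.p ∨ es = S1.q) ∧ (es = S2.p ∨ es = S2.q) ∧
      (es = S3.p ∨ es = S3.q) := by
  obtain ⟨c12, d12, hne12, hch12⟩ := common_two S1 S2 T12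
  obtain ⟨c13, d13, hne13, hch13⟩ := common_two S1 S3 T13
  obtain ⟨c23, d23, hne23, hch23⟩ := common_two S2 S3 T23
  -- for each pair, extract the unique common element lying in A
  have extract : ∀ {B C : Set (Sym2 V)} (SB : Sw A B) (SC : Sw A C) (c d : Sym2 V),
      c ≠ d → (∀ e, (SB.D e ∧ SC.D e) ↔ (e = c ∨ e = d)) →
      (¬ (c ∈ A ∧ d ∈ A)) → (¬ (c ∉ A ∧ d ∉ A)) →
      ∃ x, x ∈ A ∧ SB.D x ∧ SC.D x ∧ (∀ e, e ∈ A → SB.D e → SC.D e → e = x) := by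
    intro B C SB SC c d hcd hch hAA hNN
    by_cases hc : c ∈ A
    · have hd : d ∉ A := fun hd => hAA ⟨hc, hd⟩
      have h1 := (hch c).2 (Or.inl rfl)
      exact ⟨c, hc, h1.1, h1.2, fun e heA h1' h2' => by
        rcases (hch e).1 ⟨h1', h2'⟩ with rfl | rfl
        · rfl
        · exact absurd heA hd⟩
    · have hd : d ∈ A := by
        by_contra hd
        exact hNN ⟨hc, hd⟩
      have h1 := (hch d).2 (Or.inr rfl)
      exact ⟨d, hd, h1.1, h1.2, fun e heA h1' h2' => by
        rcases (hch e).1 ⟨h1', h2'⟩ with rfl | rfl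
        · exact absurd heA hc
        · rfl⟩
  obtain ⟨x12, hx12A, hx12B, hx12C, hx12u⟩ := extract S1 S2 c12 d12 hne12 hch12
    (fun h => no_shared_rem S1 S2 S3 T31 T32 h12 h13 h23 (both_rem S1 S2 hne12 hch12 h.1 h.2))
    (fun h => no_shared_add S1 S2 S3 T31 T32 h12 h13 h23 (both_add S1 S2 hne12 hch12 h.1 h.2))
  obtain ⟨x13, hx13A, hx13B, hx13C, hx13u⟩ := extract S1 S3 c13 d13 hne13 hch13
    (fun h => no_shared_rem S1 S3 S2 T21 T23 h13 h12 (Ne.symm h23)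
      (both_rem S1 S3 hne13 hch13 h.1 h.2))
    (fun h => no_shared_add S1 S3 S2 T21 T23 h13 h12 (Ne.symm h23)
      (both_add S1 S3 hne13 hch13 h.1 h.2))
  obtain ⟨x23, hx23A, hx23B, hx23C, hx23u⟩ := extract S2 S3 c23 d23 hne23 hch23
    (fun h => no_shared_rem S2 S3 S1 T12 T13 h23 (Ne.symm h12) (Ne.symm h13)
      (both_rem S2 S3 hne23 hch23 h.1 h.2))
    (fun h => no_shared_add S2 S3 S1 T12 T13 h23 (Ne.symm h12) (Ne.symm h13)
      (both_add S2 S3 hne23 hch23 h.1 h.2))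
  by_cases hx : x12 = x13
  · -- then also x23 must coincide
    by_cases hx' : x12 = x23
    · exact ⟨x12, hx12A, S1.remD hx12B hx12A, S2.remD hx12C hx12A,
        S3.remD (hx ▸ hx13C) hx12A⟩
    · -- removed pairs of S2 and S3 would coincide
      exfalso
      have hD3x12 : S3.D x12 := hx ▸ hx13C
      have pair2 := pair_determine hx'
        (S2.remD hx12C hx12A) (S2.remD hx23B hx23A)
      have pair3 := pair_determine hx'
        (S3.remD hD3x12 hx12A) (S3.remD hx23C hx23A)
      exact no_shared_rem S2 S3 S1 T12 T13 h23 (Ne.symm h12) (Ne.symm h13)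
        (pair_trans pair2 pair3)
  · -- triangle configuration: contradiction
    exfalso
    have hx' : x12 ≠ x23 := by
      rintro rfl
      exact hx (hx13u x12 hx12A hx12B (hx23C))
    have hx'' : x13 ≠ x23 := by
      rintro rfl
      exact hx' (hx12u x13 hx13A hx13B hx23B).symm
    have pair1 := pair_determine hx
      (S1.remD hx12B hx12A) (S1.remD hx13B hx13A)
    have pair2 := pair_determine hx'
      (S2.remD hx12C hx12A) (S2.remD hx23B hx23A)
    have pair3 := pair_determine hx''
      (S3.remD hx13C hx13A) (S3.remD hx23C hx23A)
    have hdisj : DisjE x13 x23 := by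
      rcases pair3 with ⟨h5, h6⟩ | ⟨h5, h6⟩ <;> rw [h5, h6]
      exacts [S3.dpq, S3.dpq.symm]
    -- x23 ∈ E1 \ E2 and x13 ∈ E2 \ E1
    have hnD1 : ¬ S1.D x23 := by
      intro h
      rcases pair1 with ⟨h5, h6⟩ | ⟨h5, h6⟩ <;> rcases S1.remD h hx23A with h7 | h7
      · exact hx' (h5.trans h7.symm)
      · exact hx'' (h6.trans h7.symm)
      · exact hx'' (h6.trans h7.symm)
      · exact hx' (h5.trans h7.symm)
    have hnD2 : ¬ S2.D x13 := by
      intro h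
      rcases pair2 with ⟨h5, h6⟩ | ⟨h5, h6⟩ <;> rcases S2.remD h hx13A with h7 | h7
      · exact hx (h5.trans h7.symm)
      · exact hx'' (h7.trans h6.symm)
      · exact hx'' (h7.trans h6.symm)
      · exact hx (h5.trans h7.symm)
    have hx23E1 : x23 ∈ E1 := (S1.mem_iff x23).2 (Or.inl ⟨hx23A, hnD1⟩)
    have hx23nE2 : x23 ∉ E2 := by
      rw [S2.mem_iff x23]
      rintro (⟨-, h⟩ | ⟨-, h⟩)
      · exact h hx23B
      · exact h hx23A
    have hx13nE1 : x13 ∉ E1 := by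
      rw [S1.mem_iff x13]
      rintro (⟨-, h⟩ | ⟨-, h⟩)
      · exact h hx13B
      · exact h hx13A
    have hx13E2 : x13 ∈ E2 := (S2.mem_iff x13).2 (Or.inl ⟨hx13A, hnD2⟩)
    have h23mem := (T12.sdiff1 x23).1 ⟨hx23E1, hx23nE2⟩
    have h13mem := (T12.sdiff2 x13).1 ⟨hx13nE1, hx13E2⟩
    have hmeet : MeetE x13 x23 := by
      rcases h13mem with h5 | h5 <;> rcases h23mem with h6 | h6 <;> rw [h5, h6]
      exacts [T12.mrp, T12.mrq, T12.mtp, T12.mtq]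
    exact not_meet_of_disj hdisj hmeet

end VennAux

namespace VennAux
variable {V : Type*}

lemma Sw.memA {A B : Set (Sym2 V)} (S : Sw A B) (e : Sym2 V) (hA : e ∈ A) :
    e ∈ B ↔ ¬ S.D e := by
  rw [S.mem_iff]
  generalize S.D e = d
  simp only [Xor', Xor]
  tauto

lemma Sw.memNA {A B : Set (Sym2 V)} (S : Sw A B) (e : Sym2 V) (hA : e ∉ A) :
    e ∈ B ↔ S.D e := by
  rw [S.mem_iff]
  generalize S.D e = d
  simp only [Xor', Xor]
  tauto

set_option maxHeartbeats 2000000 in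
lemma master {A E1 E2 E3 : Set (Sym2 V)}
    (S1 : Sw A E1) (S2 : Sw A E2) (S3 : Sw A E3)
    (T12 : Sw E1 E2) (T13 : Sw E1 E3) (T23 : Sw E2 E3)
    (T21 : Sw E2 E1) (T31 : Sw E3 E1) (T32 : Sw E3 E2)
    (h12 : E1 ≠ E2) (h13 : E1 ≠ E3) (h23 : E2 ≠ E3) :
    ∃ es fs a1 a2 a3 r1 r2 r3 : Sym2 V,
      (∀ e, (e ∈ A ∧ e ∉ E1 ∧ e ∉ E2 ∧ e ∉ E3) ↔ e = es) ∧
      (∀ e, (e ∉ A ∧ e ∈ E1 ∧ e ∈ E2 ∧ e ∈ E3) ↔ e = fs) ∧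
      (∀ e, (e ∉ A ∧ e ∈ E1 ∧ e ∉ E2 ∧ e ∉ E3) ↔ e = a1) ∧
      (∀ e, (e ∉ A ∧ e ∉ E1 ∧ e ∈ E2 ∧ e ∉ E3) ↔ e = a2) ∧
      (∀ e, (e ∉ A ∧ e ∉ E1 ∧ e ∉ E2 ∧ e ∈ E3) ↔ e = a3) ∧
      (∀ e, (e ∈ A ∧ e ∉ E1 ∧ e ∈ E2 ∧ e ∈ E3) ↔ e = r1) ∧
      (∀ e, (e ∈ A ∧ e ∈ E1 ∧ e ∉ E2 ∧ e ∈ E3) ↔ e = r2) ∧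
      (∀ e, (e ∈ A ∧ e ∈ E1 ∧ e ∈ E2 ∧ e ∉ E3) ↔ e = r3) ∧
      (∀ e, ¬(e ∈ A ∧ e ∈ E1 ∧ e ∉ E2 ∧ e ∉ E3)) ∧
      (∀ e, ¬(e ∈ A ∧ e ∉ E1 ∧ e ∈ E2 ∧ e ∉ E3)) ∧
      (∀ e, ¬(e ∈ A ∧ e ∉ E1 ∧ e ∉ E2 ∧ e ∈ E3)) ∧
      (∀ e, ¬(e ∉ A ∧ e ∈ E1 ∧ e ∈ E2 ∧ e ∉ E3)) ∧
      (∀ e, ¬(e ∉ A ∧ e ∈ E1 ∧ e ∉ E2 ∧ e ∈ E3)) ∧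
      (∀ e, ¬(e ∉ A ∧ e ∉ E1 ∧ e ∈ E2 ∧ e ∈ E3)) := by
  have hc12 : E1ᶜ ≠ E2ᶜ := fun h => h12 (by rw [← compl_compl E1, h, compl_compl])
  have hc13 : E1ᶜ ≠ E3ᶜ := fun h => h13 (by rw [← compl_compl E1, h, compl_compl])
  have hc23 : E2ᶜ ≠ E3ᶜ := fun h => h23 (by rw [← compl_compl E2, h, compl_compl])
  obtain ⟨es, hesA, hes1, hes2, hes3⟩ :=
    shared_rem_common S1 S2 S3 T12 T13 T23 T21 T31 T32 h12 h13 h23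
  obtain ⟨fs, hfsA', hfs1, hfs2, hfs3⟩ :=
    shared_rem_common S1.compl S2.compl S3.compl T12.compl T13.compl T23.compl
      T21.compl T31.compl T32.compl hc12 hc13 hc23
  have hfsA : fs ∉ A := hfsA'
  have hfs1' : fs = S1.r ∨ fs = S1.t := hfs1
  have hfs2' : fs = S2.r ∨ fs = S2.t := hfs2
  have hfs3' : fs = S3.r ∨ fs = S3.t := hfs3
  have hDes1 : S1.D es := by rcases hes1 with h | h <;> rw [h]; exacts [S1.Dp, S1.Dq]
  have hDes2 : S2.D es := by rcases hes2 with h | h <;> rw [h]; exacts [S2.Dp, S2.Dq]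
  have hDes3 : S3.D es := by rcases hes3 with h | h <;> rw [h]; exacts [S3.Dp, S3.Dq]
  have hDfs1 : S1.D fs := by rcases hfs1' with h | h <;> rw [h]; exacts [S1.Dr, S1.Dt]
  have hDfs2 : S2.D fs := by rcases hfs2' with h | h <;> rw [h]; exacts [S2.Dr, S2.Dt]
  have hDfs3 : S3.D fs := by rcases hfs3' with h | h <;> rw [h]; exacts [S3.Dr, S3.Dt]
  have hef : es ≠ fs := fun h => hfsA (h ▸ hesA)
  -- common elements of each pair of toggled sets are exactly es, fs
  have mkCom : ∀ {B C : Set (Sym2 V)} (SB : Sw A B) (SC : Sw A C), Sw B C →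
      SB.D es → SC.D es → SB.D fs → SC.D fs →
      ∀ e, SB.D e → SC.D e → e = es ∨ e = fs := by
    intro B C SB SC TBC hBes hCes hBfs hCfs e he1 he2
    obtain ⟨c, d, hcd, hch⟩ := common_two SB SC TBC
    have h1 := (hch es).1 ⟨hBes, hCes⟩
    have h2 := (hch fs).1 ⟨hBfs, hCfs⟩
    have hp := pair_determine hef h1 h2
    rcases (hch e).1 ⟨he1, he2⟩ with rfl | rfl
    · rcases hp with ⟨ha, -⟩ | ⟨-, hb⟩
      · exact Or.inl ha.symm
      · exact Or.inr hb.symm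
    · rcases hp with ⟨-, hb⟩ | ⟨ha, -⟩
      · exact Or.inr hb.symm
      · exact Or.inl ha.symm
  have hcom12 := mkCom S1 S2 T12 hDes1 hDes2 hDfs1 hDfs2
  have hcom13 := mkCom S1 S3 T13 hDes1 hDes3 hDfs1 hDfs3
  have hcom23 := mkCom S2 S3 T23 hDes2 hDes3 hDfs2 hDfs3
  -- the private removed/added edges of each switch
  have mkRem : ∀ {B : Set (Sym2 V)} (S : Sw A B), (es = S.p ∨ es = S.q) →
      ∃ ρ, ρ ∈ A ∧ S.D ρ ∧ ρ ≠ es ∧ ∀ e, e ∈ A → S.D e → e ≠ es → e = ρ := by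
    intro B S h
    rcases h with h | h
    · refine ⟨S.q, S.hq, S.Dq, fun hq => S.pq_ne (h.symm.trans hq.symm), ?_⟩
      · intro e heA heD hne
        rcases S.remD heD heA with h7 | h7
        · exact absurd (h7.trans h.symm) hne
        · exact h7
    · refine ⟨S.p, S.hp, S.Dp, fun hp => S.pq_ne (hp.trans h), ?_⟩
      · intro e heA heD hne
        rcases S.remD heD heA with h7 | h7
        · exact h7
        · exact absurd (h7.trans h.symm) hne
  have mkAdd : ∀ {B : Set (Sym2 V)} (S : Sw A B), (fs = S.r ∨ fs = S.t) →
      ∃ α, α ∉ A ∧ S.D α ∧ α ≠ fs ∧ ∀ e, e ∉ A → S.D e → e ≠ fs → e = α := by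
    intro B S h
    rcases h with h | h
    · refine ⟨S.t, S.ht, S.Dt, fun ht => S.rt_ne (h.symm.trans ht.symm), ?_⟩
      · intro e heA heD hne
        rcases S.addD heD heA with h7 | h7
        · exact absurd (h7.trans h.symm) hne
        · exact h7
    · refine ⟨S.r, S.hr, S.Dr, fun hr => S.rt_ne (hr.trans h), ?_⟩
      · intro e heA heD hne
        rcases S.addD heD heA with h7 | h7
        · exact h7
        · exact absurd (h7.trans h.symm) hne
  obtain ⟨ρ1, hρ1A, hρ1D, hρ1ne, hρ1u⟩ := mkRem S1 hes1
  obtain ⟨ρ2, hρ2A, hρ2D, hρ2ne, hρ2u⟩ := mkRem S2 hes2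
  obtain ⟨ρ3, hρ3A, hρ3D, hρ3ne, hρ3u⟩ := mkRem S3 hes3
  obtain ⟨α1, hα1A, hα1D, hα1ne, hα1u⟩ := mkAdd S1 hfs1'
  obtain ⟨α2, hα2A, hα2D, hα2ne, hα2u⟩ := mkAdd S2 hfs2'
  obtain ⟨α3, hα3A, hα3D, hα3ne, hα3u⟩ := mkAdd S3 hfs3'
  -- private edges are toggled only by their own switch
  have hρ1n2 : ¬ S2.D ρ1 := by
    intro h
    rcases hcom12 ρ1 hρ1D h with h' | h'
    · exact hρ1ne h'
    · exact hfsA (h' ▸ hρ1A)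
  have hρ1n3 : ¬ S3.D ρ1 := by
    intro h
    rcases hcom13 ρ1 hρ1D h with h' | h'
    · exact hρ1ne h'
    · exact hfsA (h' ▸ hρ1A)
  have hρ2n1 : ¬ S1.D ρ2 := by
    intro h
    rcases hcom12 ρ2 h hρ2D with h' | h'
    · exact hρ2ne h'
    · exact hfsA (h' ▸ hρ2A)
  have hρ2n3 : ¬ S3.D ρ2 := by
    intro h
    rcases hcom23 ρ2 hρ2D h with h' | h'
    · exact hρ2ne h'
    · exact hfsA (h' ▸ hρ2A)
  have hρ3n1 : ¬ S1.D ρ3 := by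
    intro h
    rcases hcom13 ρ3 h hρ3D with h' | h'
    · exact hρ3ne h'
    · exact hfsA (h' ▸ hρ3A)
  have hρ3n2 : ¬ S2.D ρ3 := by
    intro h
    rcases hcom23 ρ3 h hρ3D with h' | h'
    · exact hρ3ne h'
    · exact hfsA (h' ▸ hρ3A)
  have hα1n2 : ¬ S2.D α1 := by
    intro h
    rcases hcom12 α1 hα1D h with h' | h'
    · exact hα1A (h' ▸ hesA)
    · exact hα1ne h'
  have hα1n3 : ¬ S3.D α1 := by
    intro h
    rcases hcom13 α1 hα1D h with h' | h'
    · exact hα1A (h' ▸ hesA)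
    · exact hα1ne h'
  have hα2n1 : ¬ S1.D α2 := by
    intro h
    rcases hcom12 α2 h hα2D with h' | h'
    · exact hα2A (h' ▸ hesA)
    · exact hα2ne h'
  have hα2n3 : ¬ S3.D α2 := by
    intro h
    rcases hcom23 α2 hα2D h with h' | h'
    · exact hα2A (h' ▸ hesA)
    · exact hα2ne h'
  have hα3n1 : ¬ S1.D α3 := by
    intro h
    rcases hcom13 α3 h hα3D with h' | h'
    · exact hα3A (h' ▸ hesA)
    · exact hα3ne h'
  have hα3n2 : ¬ S2.D α3 := by
    intro h
    rcases hcom23 α3 h hα3D with h' | h'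
    · exact hα3A (h' ▸ hesA)
    · exact hα3ne h'
  refine ⟨es, fs, α1, α2, α3, ρ1, ρ2, ρ3, ?_, ?_, ?_, ?_, ?_, ?_, ?_, ?_, ?_, ?_, ?_, ?_, ?_, ?_⟩
  · intro e
    constructor
    · rintro ⟨hA, h1, h2, h3⟩
      have d1 : S1.D e := not_not.1 (by rw [Sw.memA S1 e hA] at h1; exact h1)
      have d2 : S2.D e := not_not.1 (by rw [Sw.memA S2 e hA] at h2; exact h2)
      rcases hcom12 e d1 d2 with rfl | rfl
      · rfl
      · exact absurd hA hfsA
    · rintro rfl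
      exact ⟨hesA, fun h => (Sw.memA S1 _ hesA).1 h hDes1,
        fun h => (Sw.memA S2 _ hesA).1 h hDes2, fun h => (Sw.memA S3 _ hesA).1 h hDes3⟩
  · intro e
    constructor
    · rintro ⟨hA, h1, h2, h3⟩
      have d1 : S1.D e := (Sw.memNA S1 e hA).1 h1
      have d2 : S2.D e := (Sw.memNA S2 e hA).1 h2
      rcases hcom12 e d1 d2 with rfl | rfl
      · exact absurd hesA hA
      · rfl
    · rintro rfl
      exact ⟨hfsA, (Sw.memNA S1 _ hfsA).2 hDfs1, (Sw.memNA S2 _ hfsA).2 hDfs2,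
        (Sw.memNA S3 _ hfsA).2 hDfs3⟩
  · intro e
    constructor
    · rintro ⟨hA, h1, h2, h3⟩
      have d1 : S1.D e := (Sw.memNA S1 e hA).1 h1
      have nd2 : ¬ S2.D e := fun h => h2 ((Sw.memNA S2 e hA).2 h)
      exact hα1u e hA d1 (fun hf => nd2 (hf ▸ hDfs2))
    · rintro rfl
      exact ⟨hα1A, (Sw.memNA S1 _ hα1A).2 hα1D,
        fun h => hα1n2 ((Sw.memNA S2 _ hα1A).1 h), fun h => hα1n3 ((Sw.memNA S3 _ hα1A).1 h)⟩
  · intro e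
    constructor
    · rintro ⟨hA, h1, h2, h3⟩
      have d2 : S2.D e := (Sw.memNA S2 e hA).1 h2
      have nd1 : ¬ S1.D e := fun h => h1 ((Sw.memNA S1 e hA).2 h)
      exact hα2u e hA d2 (fun hf => nd1 (hf ▸ hDfs1))
    · rintro rfl
      exact ⟨hα2A, fun h => hα2n1 ((Sw.memNA S1 _ hα2A).1 h),
        (Sw.memNA S2 _ hα2A).2 hα2D, fun h => hα2n3 ((Sw.memNA S3 _ hα2A).1 h)⟩
  · intro e
    constructor
    · rintro ⟨hA, h1, h2, h3⟩
      have d3 : S3.D e := (Sw.memNA S3 e hA).1 h3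
      have nd1 : ¬ S1.D e := fun h => h1 ((Sw.memNA S1 e hA).2 h)
      exact hα3u e hA d3 (fun hf => nd1 (hf ▸ hDfs1))
    · rintro rfl
      exact ⟨hα3A, fun h => hα3n1 ((Sw.memNA S1 _ hα3A).1 h),
        fun h => hα3n2 ((Sw.memNA S2 _ hα3A).1 h), (Sw.memNA S3 _ hα3A).2 hα3D⟩
  · intro e
    constructor
    · rintro ⟨hA, h1, h2, h3⟩
      have d1 : S1.D e := not_not.1 (by rw [Sw.memA S1 e hA] at h1; exact h1)
      have nd2 : ¬ S2.D e := (Sw.memA S2 e hA).1 h2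
      exact hρ1u e hA d1 (fun hs => nd2 (hs ▸ hDes2))
    · rintro rfl
      exact ⟨hρ1A, fun h => (Sw.memA S1 _ hρ1A).1 h hρ1D,
        (Sw.memA S2 _ hρ1A).2 hρ1n2, (Sw.memA S3 _ hρ1A).2 hρ1n3⟩
  · intro e
    constructor
    · rintro ⟨hA, h1, h2, h3⟩
      have d2 : S2.D e := not_not.1 (by rw [Sw.memA S2 e hA] at h2; exact h2)
      have nd1 : ¬ S1.D e := (Sw.memA S1 e hA).1 h1
      exact hρ2u e hA d2 (fun hs => nd1 (hs ▸ hDes1))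
    · rintro rfl
      exact ⟨hρ2A, (Sw.memA S1 _ hρ2A).2 hρ2n1,
        fun h => (Sw.memA S2 _ hρ2A).1 h hρ2D, (Sw.memA S3 _ hρ2A).2 hρ2n3⟩
  · intro e
    constructor
    · rintro ⟨hA, h1, h2, h3⟩
      have d3 : S3.D e := not_not.1 (by rw [Sw.memA S3 e hA] at h3; exact h3)
      have nd1 : ¬ S1.D e := (Sw.memA S1 e hA).1 h1
      exact hρ3u e hA d3 (fun hs => nd1 (hs ▸ hDes1))
    · rintro rfl
      exact ⟨hρ3A, (Sw.memA S1 _ hρ3A).2 hρ3n1, (Sw.memA S2 _ hρ3A).2 hρ3n2,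
        fun h => (Sw.memA S3 _ hρ3A).1 h hρ3D⟩
  · rintro e ⟨hA, h1, h2, h3⟩
    have nd1 : ¬ S1.D e := (Sw.memA S1 e hA).1 h1
    have d2 : S2.D e := not_not.1 (by rw [Sw.memA S2 e hA] at h2; exact h2)
    have d3 : S3.D e := not_not.1 (by rw [Sw.memA S3 e hA] at h3; exact h3)
    rcases hcom23 e d2 d3 with rfl | rfl
    · exact nd1 hDes1
    · exact hfsA hA
  · rintro e ⟨hA, h1, h2, h3⟩
    have nd2 : ¬ S2.D e := (Sw.memA S2 e hA).1 h2
    have d1 : S1.D e := not_not.1 (by rw [Sw.memA S1 e hA] at h1; exact h1)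
    have d3 : S3.D e := not_not.1 (by rw [Sw.memA S3 e hA] at h3; exact h3)
    rcases hcom13 e d1 d3 with rfl | rfl
    · exact nd2 hDes2
    · exact hfsA hA
  · rintro e ⟨hA, h1, h2, h3⟩
    have nd3 : ¬ S3.D e := (Sw.memA S3 e hA).1 h3
    have d1 : S1.D e := not_not.1 (by rw [Sw.memA S1 e hA] at h1; exact h1)
    have d2 : S2.D e := not_not.1 (by rw [Sw.memA S2 e hA] at h2; exact h2)
    rcases hcom12 e d1 d2 with rfl | rfl
    · exact nd3 hDes3
    · exact hfsA hA
  · rintro e ⟨hA, h1, h2, h3⟩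
    have d1 : S1.D e := (Sw.memNA S1 e hA).1 h1
    have d2 : S2.D e := (Sw.memNA S2 e hA).1 h2
    rcases hcom12 e d1 d2 with rfl | rfl
    · exact hA hesA
    · exact h3 ((Sw.memNA S3 _ hfsA).2 hDfs3)
  · rintro e ⟨hA, h1, h2, h3⟩
    have d1 : S1.D e := (Sw.memNA S1 e hA).1 h1
    have d3 : S3.D e := (Sw.memNA S3 e hA).1 h3
    rcases hcom13 e d1 d3 with rfl | rfl
    · exact hA hesA
    · exact h2 ((Sw.memNA S2 _ hfsA).2 hDfs2)
  · rintro e ⟨hA, h1, h2, h3⟩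
    have d2 : S2.D e := (Sw.memNA S2 e hA).1 h2
    have d3 : S3.D e := (Sw.memNA S3 e hA).1 h3
    rcases hcom23 e d2 d3 with rfl | rfl
    · exact hA hesA
    · exact h1 ((Sw.memNA S1 _ hfsA).2 hDfs1)

end VennAux

open VennAux in
set_option maxHeartbeats 2000000 in
/-- for four distinct realizations pairwise related by a 2-switch, each with `m`
edges, the number `s I` of vertex pairs that are edges of exactly the `R i` with `i ∈ I`
satisfies: `s {i} = 1`, `s ({i}ᶜ) = 1`, and `s I = 0` for every 2-element `I`. -/
theorem venn_counts {V : Type*} [Fintype V] (R : Fin 4 → SimpleGraph V) (m : ℕ)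
    (hdist : ∀ i j, i ≠ j → R i ≠ R j)
    (hsw : ∀ i j, i ≠ j → IsTwoSwitch (R i) (R j))
    (hm : ∀ i, (R i).edgeSet.ncard = m)
    (s : Finset (Fin 4) → ℕ)
    (hs : ∀ I, s I = {e : Sym2 V | ∀ i, e ∈ (R i).edgeSet ↔ i ∈ I}.ncard) :
    (∀ i, s {i} = 1) ∧ (∀ i, s ({i}ᶜ) = 1) ∧ (∀ I, I.card = 2 → s I = 0) := by
  classical
  obtain ⟨S1⟩ := sw_of_isTwoSwitch (hsw 0 1 (by decide))
  obtain ⟨S2⟩ := sw_of_isTwoSwitch (hsw 0 2 (by decide))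
  obtain ⟨S3⟩ := sw_of_isTwoSwitch (hsw 0 3 (by decide))
  obtain ⟨T12⟩ := sw_of_isTwoSwitch (hsw 1 2 (by decide))
  obtain ⟨T13⟩ := sw_of_isTwoSwitch (hsw 1 3 (by decide))
  obtain ⟨T23⟩ := sw_of_isTwoSwitch (hsw 2 3 (by decide))
  obtain ⟨T21⟩ := sw_of_isTwoSwitch (hsw 2 1 (by decide))
  obtain ⟨T31⟩ := sw_of_isTwoSwitch (hsw 3 1 (by decide))
  obtain ⟨T32⟩ := sw_of_isTwoSwitch (hsw 3 2 (by decide))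
  have h12 : (R 1).edgeSet ≠ (R 2).edgeSet :=
    fun h => hdist 1 2 (by decide) (SimpleGraph.edgeSet_inj.1 h)
  have h13 : (R 1).edgeSet ≠ (R 3).edgeSet :=
    fun h => hdist 1 3 (by decide) (SimpleGraph.edgeSet_inj.1 h)
  have h23 : (R 2).edgeSet ≠ (R 3).edgeSet :=
    fun h => hdist 2 3 (by decide) (SimpleGraph.edgeSet_inj.1 h)
  obtain ⟨es, fs, a1, a2, a3, r1, r2, r3, P0, Pf, P1, P2, P3, Q1, Q2, Q3,
      N01, N02, N03, N12, N13, N23⟩ :=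
    master S1 S2 S3 T12 T13 T23 T21 T31 T32 h12 h13 h23
  have singl : ∀ (I : Finset (Fin 4)) (x : Sym2 V),
      (∀ e : Sym2 V, (∀ k, e ∈ (R k).edgeSet ↔ k ∈ I) ↔ e = x) →
      {e : Sym2 V | ∀ k, e ∈ (R k).edgeSet ↔ k ∈ I}.ncard = 1 := by
    intro I x h
    have hx : {e : Sym2 V | ∀ k, e ∈ (R k).edgeSet ↔ k ∈ I} = {x} := Set.ext fun e => h e
    rw [hx, Set.ncard_singleton]
  refine ⟨?_, ?_, ?_⟩
  · intro i
    rw [hs]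
    fin_cases i
    · refine singl _ es fun e => ⟨fun h => (P0 e).1 ⟨(h 0).2 (by decide),
        fun hm => absurd ((h 1).1 hm) (by decide),
        fun hm => absurd ((h 2).1 hm) (by decide),
        fun hm => absurd ((h 3).1 hm) (by decide)⟩, ?_⟩
      rintro rfl k
      obtain ⟨m0, m1, m2, m3⟩ := (P0 _).2 rfl
      fin_cases k
      · exact iff_of_true m0 (by decide)
      · exact iff_of_false m1 (by decide)
      · exact iff_of_false m2 (by decide)
      · exact iff_of_false m3 (by decide)
    · refine singl _ a1 fun e => ⟨fun h => (P1 e).1 ⟨fun hm => absurd ((h 0).1 hm) (by decide),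
        (h 1).2 (by decide),
        fun hm => absurd ((h 2).1 hm) (by decide),
        fun hm => absurd ((h 3).1 hm) (by decide)⟩, ?_⟩
      rintro rfl k
      obtain ⟨m0, m1, m2, m3⟩ := (P1 _).2 rfl
      fin_cases k
      · exact iff_of_false m0 (by decide)
      · exact iff_of_true m1 (by decide)
      · exact iff_of_false m2 (by decide)
      · exact iff_of_false m3 (by decide)
    · refine singl _ a2 fun e => ⟨fun h => (P2 e).1 ⟨fun hm => absurd ((h 0).1 hm) (by decide),
        fun hm => absurd ((h 1).1 hm) (by decide),
        (h 2).2 (by decide),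
        fun hm => absurd ((h 3).1 hm) (by decide)⟩, ?_⟩
      rintro rfl k
      obtain ⟨m0, m1, m2, m3⟩ := (P2 _).2 rfl
      fin_cases k
      · exact iff_of_false m0 (by decide)
      · exact iff_of_false m1 (by decide)
      · exact iff_of_true m2 (by decide)
      · exact iff_of_false m3 (by decide)
    · refine singl _ a3 fun e => ⟨fun h => (P3 e).1 ⟨fun hm => absurd ((h 0).1 hm) (by decide),
        fun hm => absurd ((h 1).1 hm) (by decide),
        fun hm => absurd ((h 2).1 hm) (by decide),
        (h 3).2 (by decide)⟩, ?_⟩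
      rintro rfl k
      obtain ⟨m0, m1, m2, m3⟩ := (P3 _).2 rfl
      fin_cases k
      · exact iff_of_false m0 (by decide)
      · exact iff_of_false m1 (by decide)
      · exact iff_of_false m2 (by decide)
      · exact iff_of_true m3 (by decide)
  · intro i
    rw [hs]
    fin_cases i
    · refine singl _ fs fun e => ⟨fun h => (Pf e).1 ⟨fun hm => absurd ((h 0).1 hm) (by decide),
        (h 1).2 (by decide), (h 2).2 (by decide), (h 3).2 (by decide)⟩, ?_⟩
      rintro rfl k
      obtain ⟨m0, m1, m2, m3⟩ := (Pf _).2 rfl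
      fin_cases k
      · exact iff_of_false m0 (by decide)
      · exact iff_of_true m1 (by decide)
      · exact iff_of_true m2 (by decide)
      · exact iff_of_true m3 (by decide)
    · refine singl _ r1 fun e => ⟨fun h => (Q1 e).1 ⟨(h 0).2 (by decide),
        fun hm => absurd ((h 1).1 hm) (by decide),
        (h 2).2 (by decide), (h 3).2 (by decide)⟩, ?_⟩
      rintro rfl k
      obtain ⟨m0, m1, m2, m3⟩ := (Q1 _).2 rfl
      fin_cases k
      · exact iff_of_true m0 (by decide)
      · exact iff_of_false m1 (by decide)
      · exact iff_of_true m2 (by decide)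
      · exact iff_of_true m3 (by decide)
    · refine singl _ r2 fun e => ⟨fun h => (Q2 e).1 ⟨(h 0).2 (by decide),
        (h 1).2 (by decide),
        fun hm => absurd ((h 2).1 hm) (by decide),
        (h 3).2 (by decide)⟩, ?_⟩
      rintro rfl k
      obtain ⟨m0, m1, m2, m3⟩ := (Q2 _).2 rfl
      fin_cases k
      · exact iff_of_true m0 (by decide)
      · exact iff_of_true m1 (by decide)
      · exact iff_of_false m2 (by decide)
      · exact iff_of_true m3 (by decide)
    · refine singl _ r3 fun e => ⟨fun h => (Q3 e).1 ⟨(h 0).2 (by decide),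
        (h 1).2 (by decide), (h 2).2 (by decide),
        fun hm => absurd ((h 3).1 hm) (by decide)⟩, ?_⟩
      rintro rfl k
      obtain ⟨m0, m1, m2, m3⟩ := (Q3 _).2 rfl
      fin_cases k
      · exact iff_of_true m0 (by decide)
      · exact iff_of_true m1 (by decide)
      · exact iff_of_true m2 (by decide)
      · exact iff_of_false m3 (by decide)
  · intro I hI
    rw [hs]
    obtain ⟨a, b, hab, rfl⟩ := Finset.card_eq_two.1 hI
    have hempty : {e : Sym2 V | ∀ k, e ∈ (R k).edgeSet ↔ k ∈ ({a, b} : Finset (Fin 4))} = ∅ := by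
      apply Set.eq_empty_iff_forall_notMem.2
      intro e he
      simp only [Set.mem_setOf_eq] at he
      fin_cases a <;> fin_cases b <;>
      first
        | exact absurd rfl hab
        | exact N01 e ⟨(he 0).2 (by decide), (he 1).2 (by decide),
            fun hm => absurd ((he 2).1 hm) (by decide),
            fun hm => absurd ((he 3).1 hm) (by decide)⟩
        | exact N02 e ⟨(he 0).2 (by decide),
            fun hm => absurd ((he 1).1 hm) (by decide), (he 2).2 (by decide),
            fun hm => absurd ((he 3).1 hm) (by decide)⟩
        | exact N03 e ⟨(he 0).2 (by decide),
            fun hm => absurd ((he 1).1 hm) (by decide),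
            fun hm => absurd ((he 2).1 hm) (by decide), (he 3).2 (by decide)⟩
        | exact N12 e ⟨fun hm => absurd ((he 0).1 hm) (by decide),
            (he 1).2 (by decide), (he 2).2 (by decide),
            fun hm => absurd ((he 3).1 hm) (by decide)⟩
        | exact N13 e ⟨fun hm => absurd ((he 0).1 hm) (by decide),
            (he 1).2 (by decide),
            fun hm => absurd ((he 2).1 hm) (by decide), (he 3).2 (by decide)⟩
        | exact N23 e ⟨fun hm => absurd ((he 0).1 hm) (by decide),
            fun hm => absurd ((he 1).1 hm) (by decide),
            (he 2).2 (by decide), (he 3).2 (by decide)⟩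
    rw [hempty, Set.ncard_empty]
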